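/- Fix Hermitian matrices H, A on ℂ^n and β > 0. The function t ↦ -(1/β) log Tr(e^{-β(H + tA)}) is concave on ℝ. -/

import Mathlib

open Matrix

variable {k : ℕ}

lemma star_unitary_mul_self (U : Matrix.unitaryGroup (Fin k) ℂ) :
    star (U : Matrix (Fin k) (Fin k) ℂ) * U = 1 := Unitary.star_mul_self_of_mem U.2

lemma unitary_mul_star_self (U : Matrix.unitaryGroup (Fin k) ℂ) :
    (U : Matrix (Fin k) (Fin k) ℂ) * star (U : Matrix (Fin k) (Fin k) ℂ) = 1 :=
  Unitary.mul_star_self_of_mem U.2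

lemma unitary_inv_eq_star (U : Matrix.unitaryGroup (Fin k) ℂ) :
    (U : Matrix (Fin k) (Fin k) ℂ)⁻¹ = star (U : Matrix (Fin k) (Fin k) ℂ) :=
  inv_eq_left_inv (star_unitary_mul_self U)

lemma unitary_isUnit (U : Matrix.unitaryGroup (Fin k) ℂ) :
    IsUnit (U : Matrix (Fin k) (Fin k) ℂ) :=
  ⟨⟨U, star U, unitary_mul_star_self U, star_unitary_mul_self U⟩, rfl⟩

lemma exp_hermitian {M : Matrix (Fin k) (Fin k) ℂ} (hM : M.IsHermitian) :
    NormedSpace.exp M = (hM.eigenvectorUnitary : Matrix (Fin k) (Fin k) ℂ) *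
      diagonal (fun i => (Real.exp (hM.eigenvalues i) : ℂ)) *
      star (hM.eigenvectorUnitary : Matrix (Fin k) (Fin k) ℂ) := by
  have hfun : (NormedSpace.exp ∘ (RCLike.ofReal ∘ hM.eigenvalues) : Fin k → ℂ)
      = fun i => (Real.exp (hM.eigenvalues i) : ℂ) := by
    funext i
    simp only [Function.comp_apply, ← Complex.exp_eq_exp_ℂ]
    exact (Complex.ofReal_exp _).symm
  conv_lhs => rw [hM.spectral_theorem, Unitary.conjStarAlgAut_apply, ← unitary_inv_eq_star hM.eigenvectorUnitary]
  rw [Matrix.exp_conj _ _ (unitary_isUnit hM.eigenvectorUnitary), Matrix.exp_diagonal,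
    unitary_inv_eq_star, Pi.exp_def]
  have : (fun i => NormedSpace.exp ((RCLike.ofReal ∘ hM.eigenvalues) i))
      = fun i : Fin k => (Real.exp (hM.eigenvalues i) : ℂ) := by
    funext i
    simp only [Function.comp_apply, ← Complex.exp_eq_exp_ℂ]
    exact (Complex.ofReal_exp _).symm
  rw [this]

lemma conj_mul_conj (U : Matrix.unitaryGroup (Fin k) ℂ) (D E : Matrix (Fin k) (Fin k) ℂ) :
    ((U : Matrix (Fin k) (Fin k) ℂ) * D * star (U : Matrix (Fin k) (Fin k) ℂ)) *
      ((U : Matrix (Fin k) (Fin k) ℂ) * E * star (U : Matrix (Fin k) (Fin k) ℂ)) =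
    (U : Matrix (Fin k) (Fin k) ℂ) * (D * E) * star (U : Matrix (Fin k) (Fin k) ℂ) := by
  have key : star (U : Matrix (Fin k) (Fin k) ℂ) * ((U : Matrix (Fin k) (Fin k) ℂ) *
      (E * star (U : Matrix (Fin k) (Fin k) ℂ))) = E * star (U : Matrix (Fin k) (Fin k) ℂ) := by
    rw [← mul_assoc, star_unitary_mul_self, one_mul]
  simp only [mul_assoc, key]

lemma trace_conj (U : Matrix.unitaryGroup (Fin k) ℂ) (D : Matrix (Fin k) (Fin k) ℂ) :
    trace ((U : Matrix (Fin k) (Fin k) ℂ) * D * star (U : Matrix (Fin k) (Fin k) ℂ)) = trace D := by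
  rw [Matrix.trace_mul_comm, ← mul_assoc, star_unitary_mul_self, one_mul]

lemma trace_exp_re {M : Matrix (Fin k) (Fin k) ℂ} (hM : M.IsHermitian) :
    (trace (NormedSpace.exp M)).re = ∑ i, Real.exp (hM.eigenvalues i) := by
  rw [exp_hermitian hM, _root_.trace_conj, trace_diagonal]
  simp [Complex.exp_ofReal_re]

lemma trace_exp_mul_self_re {M : Matrix (Fin k) (Fin k) ℂ} (hM : M.IsHermitian) :
    (trace (NormedSpace.exp M * M)).re
      = ∑ i, Real.exp (hM.eigenvalues i) * hM.eigenvalues i := by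
  have h2 : NormedSpace.exp M * M
      = ((hM.eigenvectorUnitary : Matrix (Fin k) (Fin k) ℂ) *
          diagonal (fun i => (Real.exp (hM.eigenvalues i) : ℂ)) * star (hM.eigenvectorUnitary : Matrix (Fin k) (Fin k) ℂ)) *
        ((hM.eigenvectorUnitary : Matrix (Fin k) (Fin k) ℂ) *
          diagonal (RCLike.ofReal ∘ hM.eigenvalues) * star (hM.eigenvectorUnitary : Matrix (Fin k) (Fin k) ℂ)) := by
    rw [← hM.spectral_theorem.trans (Unitary.conjStarAlgAut_apply _ _), ← exp_hermitian hM]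
  rw [h2, conj_mul_conj, diagonal_mul_diagonal, _root_.trace_conj, trace_diagonal]
  simp [Complex.exp_ofReal_re]

lemma trace_conj_mul_conj (U V E F : Matrix (Fin k) (Fin k) ℂ) :
    trace ((U * E * star U) * (V * F * star V))
      = trace (E * ((star U * V) * F * star (star U * V))) := by
  rw [Matrix.star_mul, star_star]
  simp only [mul_assoc]
  rw [Matrix.trace_mul_comm]
  simp only [mul_assoc]

lemma trace_exp_mul_re {M N : Matrix (Fin k) (Fin k) ℂ} (hM : M.IsHermitian)
    (hN : N.IsHermitian) :
    (trace (NormedSpace.exp M * N)).re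
      = ∑ i, Real.exp (hM.eigenvalues i) *
          (∑ j, Complex.normSq ((star (hM.eigenvectorUnitary : Matrix (Fin k) (Fin k) ℂ) *
              (hN.eigenvectorUnitary : Matrix (Fin k) (Fin k) ℂ)) i j) * hN.eigenvalues j) := by
  set U : Matrix (Fin k) (Fin k) ℂ := (hM.eigenvectorUnitary : Matrix (Fin k) (Fin k) ℂ)
  set V : Matrix (Fin k) (Fin k) ℂ := (hN.eigenvectorUnitary : Matrix (Fin k) (Fin k) ℂ)
  set W : Matrix (Fin k) (Fin k) ℂ := star U * V with hW
  have h2 : NormedSpace.exp M * N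
      = (U * diagonal (fun i => (Real.exp (hM.eigenvalues i) : ℂ)) * star U) *
        (V * diagonal (RCLike.ofReal ∘ hN.eigenvalues) * star V) := by
    rw [← hN.spectral_theorem.trans (Unitary.conjStarAlgAut_apply _ _), ← exp_hermitian hM]
  rw [h2, trace_conj_mul_conj, ← hW]
  simp only [Matrix.trace, Matrix.diag]
  rw [Complex.re_sum]
  refine Finset.sum_congr rfl fun i _ => ?_
  rw [Matrix.diagonal_mul]
  have hentry : ((W * diagonal (RCLike.ofReal ∘ hN.eigenvalues) * star W : Matrix (Fin k) (Fin k) ℂ)) i i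
      = ∑ j, (((Complex.normSq (W i j) * hN.eigenvalues j : ℝ)) : ℂ) := by
    rw [Matrix.star_eq_conjTranspose, Matrix.mul_apply]
    refine Finset.sum_congr rfl fun j _ => ?_
    rw [Matrix.mul_diagonal, Matrix.conjTranspose_apply]
    show W i j * ((hN.eigenvalues j : ℝ) : ℂ) * star (W i j) = _
    have h3 : W i j * star (W i j) = (Complex.normSq (W i j) : ℂ) := Complex.mul_conj _
    push_cast
    rw [show W i j * ((hN.eigenvalues j : ℝ) : ℂ) * star (W i j)
        = (W i j * star (W i j)) * ((hN.eigenvalues j : ℝ) : ℂ) by ring, h3]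
  rw [hentry, Finset.mul_sum, Complex.re_sum]
  rw [Finset.mul_sum]
  refine Finset.sum_congr rfl fun j _ => ?_
  rw [show ((Real.exp (hM.eigenvalues i) : ℂ)) * (((Complex.normSq (W i j) * hN.eigenvalues j : ℝ)) : ℂ)
      = ((Real.exp (hM.eigenvalues i) * (Complex.normSq (W i j) * hN.eigenvalues j) : ℝ) : ℂ) by push_cast; ring]
  rw [Complex.ofReal_re]

lemma W_mul_star (U V : Matrix.unitaryGroup (Fin k) ℂ) :
    (star (U : Matrix (Fin k) (Fin k) ℂ) * (V : Matrix (Fin k) (Fin k) ℂ)) *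
      star (star (U : Matrix (Fin k) (Fin k) ℂ) * (V : Matrix (Fin k) (Fin k) ℂ)) = 1 := by
  rw [Matrix.star_mul, star_star, mul_assoc, ← mul_assoc (V : Matrix (Fin k) (Fin k) ℂ),
    unitary_mul_star_self, one_mul, star_unitary_mul_self]

lemma star_mul_W (U V : Matrix.unitaryGroup (Fin k) ℂ) :
    star (star (U : Matrix (Fin k) (Fin k) ℂ) * (V : Matrix (Fin k) (Fin k) ℂ)) *
      (star (U : Matrix (Fin k) (Fin k) ℂ) * (V : Matrix (Fin k) (Fin k) ℂ)) = 1 := by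
  rw [Matrix.star_mul, star_star, mul_assoc, ← mul_assoc (U : Matrix (Fin k) (Fin k) ℂ),
    unitary_mul_star_self, one_mul, star_unitary_mul_self]

lemma sum_normSq_row {W : Matrix (Fin k) (Fin k) ℂ} (h : W * star W = 1) (i : Fin k) :
    ∑ j, Complex.normSq (W i j) = 1 := by
  have h1 : (W * star W) i i = 1 := by rw [h, Matrix.one_apply_eq]
  rw [Matrix.mul_apply] at h1
  have h2 : ∑ j, (Complex.normSq (W i j) : ℂ) = 1 := by
    rw [← h1]
    refine Finset.sum_congr rfl fun j _ => ?_
    rw [Matrix.star_apply, ← Complex.mul_conj]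
    rfl
  exact_mod_cast h2

lemma sum_normSq_col {W : Matrix (Fin k) (Fin k) ℂ} (h : star W * W = 1) (j : Fin k) :
    ∑ i, Complex.normSq (W i j) = 1 := by
  have h1 : (star W * W) j j = 1 := by rw [h, Matrix.one_apply_eq]
  rw [Matrix.mul_apply] at h1
  have h2 : ∑ i, (Complex.normSq (W i j) : ℂ) = 1 := by
    rw [← h1]
    refine Finset.sum_congr rfl fun i _ => ?_
    rw [Matrix.star_apply, show star (W i j) * W i j = W i j * star (W i j) from mul_comm _ _,
      ← Complex.mul_conj]
    rfl
  exact_mod_cast h2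

lemma scalar_key {k : ℕ} (hk : k ≠ 0) (m nn : Fin k → ℝ) (c : Fin k → Fin k → ℝ)
    (hc0 : ∀ i j, 0 ≤ c i j) (hrow : ∀ i, ∑ j, c i j = 1) (hcol : ∀ j, ∑ i, c i j = 1) :
    (∑ i, Real.exp (m i) * ((∑ j, c i j * nn j) - m i)) / (∑ i, Real.exp (m i))
      + Real.log (∑ i, Real.exp (m i)) ≤ Real.log (∑ j, Real.exp (nn j)) := by
  haveI : Nonempty (Fin k) := ⟨⟨0, Nat.pos_of_ne_zero hk⟩⟩
  set Z := ∑ i, Real.exp (m i) with hZdef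
  have hZ : 0 < Z := Finset.sum_pos (fun i _ => Real.exp_pos _) Finset.univ_nonempty
  set p : Fin k → ℝ := fun i => Real.exp (m i) / Z with hpdef
  have hp0 : ∀ i, 0 < p i := fun i => div_pos (Real.exp_pos _) hZ
  have hpsum : ∑ i, p i = 1 := by
    rw [hpdef, ← Finset.sum_div, ← hZdef, div_self (ne_of_gt hZ)]
  set a : Fin k → ℝ := fun i => ∑ j, c i j * nn j with ha
  have hApos : 0 < ∑ i, Real.exp (a i) :=
    Finset.sum_pos (fun i _ => Real.exp_pos _) Finset.univ_nonempty
  have step1 : ∑ i, p i * (a i - Real.log (p i)) ≤ Real.log (∑ i, Real.exp (a i)) := by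
    have hjen := convexOn_exp.map_sum_le (t := Finset.univ) (w := p)
      (p := fun i => a i - Real.log (p i)) (fun i _ => (hp0 i).le) hpsum
      (fun i _ => Set.mem_univ _)
    simp only [smul_eq_mul] at hjen
    have hsum_eq : ∑ i, p i * Real.exp (a i - Real.log (p i)) = ∑ i, Real.exp (a i) := by
      refine Finset.sum_congr rfl fun i _ => ?_
      rw [Real.exp_sub, Real.exp_log (hp0 i)]
      field_simp
      exact div_self (hp0 i).ne'
    rw [hsum_eq] at hjen
    rw [Real.le_log_iff_exp_le hApos]
    exact hjen
  have step2 : ∑ i, Real.exp (a i) ≤ ∑ j, Real.exp (nn j) := by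
    have per : ∀ i, Real.exp (a i) ≤ ∑ j, c i j * Real.exp (nn j) := fun i => by
      have := convexOn_exp.map_sum_le (t := Finset.univ) (w := c i) (p := nn)
        (fun j _ => hc0 i j) (hrow i) (fun j _ => Set.mem_univ _)
      simpa [smul_eq_mul] using this
    calc ∑ i, Real.exp (a i) ≤ ∑ i, ∑ j, c i j * Real.exp (nn j) :=
          Finset.sum_le_sum fun i _ => per i
      _ = ∑ j, (∑ i, c i j) * Real.exp (nn j) := by
          rw [Finset.sum_comm]
          exact Finset.sum_congr rfl fun j _ => (Finset.sum_mul _ _ _).symm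
      _ = ∑ j, Real.exp (nn j) := by
          refine Finset.sum_congr rfl fun j _ => ?_
          rw [hcol j, one_mul]
  have hlog2 : Real.log (∑ i, Real.exp (a i)) ≤ Real.log (∑ j, Real.exp (nn j)) :=
    Real.log_le_log hApos step2
  have hlogp : ∀ i, Real.log (p i) = m i - Real.log Z := fun i => by
    rw [hpdef]
    simp only
    rw [Real.log_div (Real.exp_ne_zero _) (ne_of_gt hZ), Real.log_exp]
  have hL : (∑ i, Real.exp (m i) * (a i - m i)) / Z + Real.log Z
      = ∑ i, p i * (a i - Real.log (p i)) := by
    have h1 : (∑ i, Real.exp (m i) * (a i - m i)) / Z = ∑ i, p i * (a i - m i) := by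
      rw [Finset.sum_div]
      refine Finset.sum_congr rfl fun i _ => ?_
      rw [hpdef]
      field_simp
    have h2 : ∀ i, p i * (a i - Real.log (p i)) = p i * (a i - m i) + p i * Real.log Z := by
      intro i
      rw [hlogp i]
      ring
    rw [h1]
    rw [Finset.sum_congr rfl fun i _ => h2 i, Finset.sum_add_distrib, ← Finset.sum_mul, hpsum,
      one_mul]
  rw [hL]
  exact step1.trans hlog2

lemma matrix_key (hk : k ≠ 0) {M N : Matrix (Fin k) (Fin k) ℂ} (hM : M.IsHermitian)
    (hN : N.IsHermitian) :
    (trace (NormedSpace.exp M * (N - M))).re / (trace (NormedSpace.exp M)).re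
      + Real.log ((trace (NormedSpace.exp M)).re)
      ≤ Real.log ((trace (NormedSpace.exp N)).re) := by
  set U := hM.eigenvectorUnitary with hU
  set V := hN.eigenvectorUnitary with hV
  set c : Fin k → Fin k → ℝ := fun i j =>
    Complex.normSq ((star (U : Matrix (Fin k) (Fin k) ℂ) * (V : Matrix (Fin k) (Fin k) ℂ)) i j)
    with hc
  have hnum : (trace (NormedSpace.exp M * (N - M))).re
      = ∑ i, Real.exp (hM.eigenvalues i) * ((∑ j, c i j * hN.eigenvalues j) - hM.eigenvalues i) := by
    rw [mul_sub, Matrix.trace_sub, Complex.sub_re, trace_exp_mul_re hM hN,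
      trace_exp_mul_self_re hM, ← Finset.sum_sub_distrib]
    exact Finset.sum_congr rfl fun i _ => by rw [mul_sub]
  rw [hnum, trace_exp_re hM, trace_exp_re hN]
  exact scalar_key hk hM.eigenvalues hN.eigenvalues c (fun i j => Complex.normSq_nonneg _)
    (fun i => sum_normSq_row (W_mul_star U V) i) (fun j => sum_normSq_col (star_mul_W U V) j)

lemma isHermitian_smul_real {c : ℂ} (hc : star c = c) {M : Matrix (Fin k) (Fin k) ℂ}
    (hM : M.IsHermitian) : (c • M).IsHermitian := by
  unfold Matrix.IsHermitian at *
  rw [Matrix.conjTranspose_smul, hc, hM]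

lemma free_energy_convex_aux {k : ℕ} (hk : k ≠ 0) (β : ℝ) (H A : Matrix (Fin k) (Fin k) ℂ)
    (hH : H.IsHermitian) (hA : A.IsHermitian) :
    ConvexOn ℝ Set.univ (fun t : ℝ =>
      Real.log ((Matrix.trace (NormedSpace.exp ((-β : ℂ) • (H + (t : ℂ) • A)))).re)) := by
  set G : ℝ → Matrix (Fin k) (Fin k) ℂ := fun t => (-β : ℂ) • (H + (t : ℂ) • A) with hG
  have hGh : ∀ t : ℝ, (G t).IsHermitian := fun t => by
    refine isHermitian_smul_real ?_ (hH.add (isHermitian_smul_real ?_ hA)) <;>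
      simp [Complex.star_def, Complex.conj_ofReal]
  set Z : ℝ → ℝ := fun t => (trace (NormedSpace.exp (G t))).re with hZ
  set F : ℝ → ℝ := fun t => Real.log (Z t) with hF
  set K : ℝ → ℝ := fun u => β * ((trace (NormedSpace.exp (G u) * A)).re / Z u) with hK
  have hdiff : ∀ s u : ℝ, G s - G u = ((β * (u - s) : ℝ) : ℂ) • A := by
    intro s u
    rw [hG]
    simp only
    push_cast
    module
  have key : ∀ u s : ℝ, F u + (u - s) * K u ≤ F s := by
    intro u s
    have h := matrix_key hk (hGh u) (hGh s)
    have htr : (trace (NormedSpace.exp (G u) * (G s - G u))).re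
        = (β * (u - s)) * (trace (NormedSpace.exp (G u) * A)).re := by
      rw [hdiff s u, mul_smul_comm, Matrix.trace_smul, smul_eq_mul, Complex.re_ofReal_mul]
    rw [htr] at h
    calc F u + (u - s) * K u
        = (β * (u - s)) * (trace (NormedSpace.exp (G u) * A)).re / Z u + F u := by
          rw [hK]; ring
      _ ≤ F s := h
  refine ⟨convex_univ, fun x _ y _ a b ha hb hab => ?_⟩
  simp only [smul_eq_mul]
  set u := a * x + b * y with hu
  have h1 := key u x
  have h2 := key u y
  have e1 : a * (F u + (u - x) * K u) ≤ a * F x := mul_le_mul_of_nonneg_left h1 ha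
  have e2 : b * (F u + (u - y) * K u) ≤ b * F y := mul_le_mul_of_nonneg_left h2 hb
  have hz0 : a * (u - x) + b * (u - y) = 0 := by
    rw [hu]
    linear_combination (a * x + b * y) * hab
  have hz : a * ((u - x) * K u) + b * ((u - y) * K u) = 0 := by
    have : a * ((u - x) * K u) + b * ((u - y) * K u) = (a * (u - x) + b * (u - y)) * K u := by
      ring
    rw [this, hz0, zero_mul]
  have e3 : a * F u + b * F u = F u := by rw [← add_mul, hab, one_mul]
  nlinarith [e1, e2, hz, e3]

/-- The free energy `t ↦ -(1/β) log Tr(e^{-β(H+tA)})` is concave on `ℝ`,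
for Hermitian matrices `H, A` on `ℂ^n` and `β > 0`. -/
theorem free_energy_concave {n : ℕ} (β : ℝ) (hβ : 0 < β)
    (H A : Matrix (Fin n) (Fin n) ℂ) (hH : H.IsHermitian) (hA : A.IsHermitian) :
    ConcaveOn ℝ Set.univ (fun t : ℝ =>
      -(1 / β) * Real.log
        ((Matrix.trace (NormedSpace.exp ((-β : ℂ) • (H + (t : ℂ) • A)))).re)) := by
  rcases eq_or_ne n 0 with hn | hn
  · subst hn
    simp only [Matrix.trace, Matrix.diag, Finset.univ_eq_empty, Finset.sum_empty, Complex.zero_re,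
      Real.log_zero, mul_zero]
    exact concaveOn_const _ convex_univ
  · have hconv := (free_energy_convex_aux hn β H A hH hA).smul (c := 1 / β) (by positivity)
    have := hconv.neg
    simpa [Pi.neg_def, smul_eq_mul, neg_mul] using this
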